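/- For n ≥ 3 and G the dihedral subgroup of S_n generated by the n-cycle g and the order-reversing permutation h (ih = n-i+1), the normalizer of G in S_n equals {σ_{x,k} : x, k ∈ {1,…,n}, gcd(k,n) = 1}, and hence has cardinality n·φ(n). -/

import Mathlib

open scoped Fin.NatCast Fin.IntCast Fin.CommRing

namespace NormalizerDihedralAux

open Equiv Equiv.Perm Subgroup

variable {m : ℕ}

private def gg (m : ℕ) : Equiv.Perm (Fin (m + 1)) := finRotate (m + 1)
private def hh (m : ℕ) : Equiv.Perm (Fin (m + 1)) := Fin.revPerm
private def GG (m : ℕ) : Subgroup (Equiv.Perm (Fin (m + 1))) :=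
  Subgroup.closure {gg m, hh m}

private lemma gg_mem : gg m ∈ GG m :=
  Subgroup.subset_closure (Set.mem_insert _ _)

private lemma hh_mem : hh m ∈ GG m :=
  Subgroup.subset_closure (Set.mem_insert_iff.mpr (Or.inr rfl))

private lemma gg_apply (i : Fin (m + 1)) : gg m i = i + 1 := finRotate_succ_apply i

private lemma rev_eq (i : Fin (m + 1)) : Fin.rev i = -1 - i := by
  have : i + Fin.rev i = -1 := by
    apply Fin.ext
    rw [Fin.val_add, Fin.val_rev, Fin.coe_neg_one,
      show i.val + (m + 1 - (i.val + 1)) = m from by omega, Nat.mod_eq_of_lt (by omega)]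
  linear_combination (norm := abel) this

private lemma hh_apply (i : Fin (m + 1)) : hh m i = -1 - i := rev_eq i

private lemma hh_sq : hh m * hh m = 1 := by
  ext i
  simp [hh]

private lemma gg_pow (a : ℕ) : ∀ i : Fin (m + 1), (gg m ^ a) i = i + (a : Fin (m + 1)) := by
  induction a with
  | zero => simp
  | succ a ih =>
    intro i
    rw [pow_succ, Equiv.Perm.mul_apply, gg_apply, ih (i + 1)]
    push_cast
    ring

private lemma gg_pow_card : gg m ^ (m + 1) = 1 := by
  ext i
  rw [gg_pow]
  simp

private lemma gg_pow_mul_card (a : ℕ) : gg m ^ (a * (m + 1)) = 1 := by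
  rw [pow_mul', gg_pow_card, one_pow]

private lemma m_cast : ((m : Fin (m + 1))) = -1 := by
  have h : ((m : Fin (m + 1))) + 1 = 0 := by
    have := Fin.natCast_self (m + 1)
    push_cast at this
    exact this
  linear_combination (norm := ring_nf) h

private lemma hh_mul_gg_pow (b : ℕ) :
    hh m * gg m ^ b = gg m ^ (b * m) * hh m := by
  ext i
  simp only [Equiv.Perm.mul_apply, gg_pow, hh_apply]
  push_cast
  rw [m_cast]
  ring

private lemma memGG_iff (τ : Equiv.Perm (Fin (m + 1))) :
    τ ∈ GG m ↔ ∃ a : ℕ, τ = gg m ^ a ∨ τ = gg m ^ a * hh m := by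
  constructor
  · intro hτ
    let K : Subgroup (Equiv.Perm (Fin (m + 1))) :=
      { carrier := {τ | ∃ a : ℕ, τ = gg m ^ a ∨ τ = gg m ^ a * hh m}
        one_mem' := ⟨0, Or.inl (pow_zero _).symm⟩
        mul_mem' := by
          rintro x y ⟨a, rfl | rfl⟩ ⟨b, rfl | rfl⟩
          · exact ⟨a + b, Or.inl (pow_add _ _ _).symm⟩
          · exact ⟨a + b, Or.inr (by rw [← mul_assoc, ← pow_add])⟩
          · refine ⟨a + b * m, Or.inr ?_⟩
            rw [mul_assoc, hh_mul_gg_pow, ← mul_assoc, ← pow_add]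
          · refine ⟨a + b * m, Or.inl ?_⟩
            calc gg m ^ a * hh m * (gg m ^ b * hh m)
                = gg m ^ a * (hh m * gg m ^ b) * hh m := by group
              _ = gg m ^ a * (gg m ^ (b * m) * hh m) * hh m := by rw [hh_mul_gg_pow]
              _ = gg m ^ (a + b * m) * (hh m * hh m) := by rw [pow_add]; group
              _ = gg m ^ (a + b * m) := by rw [hh_sq, mul_one]
        inv_mem' := by
          rintro x ⟨a, rfl | rfl⟩
          · refine ⟨a * m, Or.inl ?_⟩
            have : gg m ^ a * gg m ^ (a * m) = 1 := by
              rw [← pow_add, show a + a * m = a * (m + 1) from by ring, gg_pow_mul_card]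
            exact inv_eq_of_mul_eq_one_right this
          · refine ⟨a * m * m, Or.inr ?_⟩
            have : gg m ^ (a * m * m) * hh m * (gg m ^ a * hh m) = 1 := by
              calc gg m ^ (a * m * m) * hh m * (gg m ^ a * hh m)
                  = gg m ^ (a * m * m) * (hh m * gg m ^ a) * hh m := by group
                _ = gg m ^ (a * m * m) * (gg m ^ (a * m) * hh m) * hh m := by
                    rw [hh_mul_gg_pow]
                _ = gg m ^ (a * m * m + a * m) * (hh m * hh m) := by rw [pow_add]; group
                _ = 1 := by
                    rw [hh_sq, mul_one, show a * m * m + a * m = a * m * (m + 1) from by ring,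
                      gg_pow_mul_card]
            exact inv_eq_of_mul_eq_one_left this }
    have hle : GG m ≤ K := by
      rw [GG, Subgroup.closure_le]
      rintro x (rfl | rfl)
      · exact ⟨1, Or.inl (pow_one _).symm⟩
      · exact ⟨0, Or.inr (by rw [pow_zero, one_mul])⟩
    exact hle hτ
  · rintro ⟨a, rfl | rfl⟩
    · exact pow_mem gg_mem a
    · exact mul_mem (pow_mem gg_mem a) hh_mem

private lemma orderOf_gg (hm : 2 ≤ m) : orderOf (gg m) = m + 1 := by
  obtain ⟨k, rfl⟩ : ∃ k, m = k + 2 := ⟨m - 2, by omega⟩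
  rw [gg, (isCycle_finRotate (n := k + 1)).orderOf, support_finRotate]
  simp

/-- Forward direction: normalizer elements are affine maps. -/
private lemma normalizer_sub (hm : 2 ≤ m) (σ : Equiv.Perm (Fin (m + 1)))
    (hσ : σ ∈ Subgroup.normalizer (GG m : Set (Equiv.Perm (Fin (m + 1))))) :
    ∃ c k : Fin (m + 1), Nat.gcd k.val (m + 1) = 1 ∧ ∀ i, σ i = c + i * k := by
  have h1 : σ * gg m * σ⁻¹ ∈ GG m :=
    (Subgroup.mem_normalizer_iff.mp hσ (gg m)).mp gg_mem
  have horder : orderOf (σ * gg m * σ⁻¹) = m + 1 := by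
    have := orderOf_injective (MulAut.conj σ).toMonoidHom
      (MulEquiv.injective (MulAut.conj σ)) (gg m)
    simpa [MulAut.conj_apply, orderOf_gg hm] using this
  rcases (memGG_iff _).mp h1 with ⟨a, ha | ha⟩
  · -- σ g σ⁻¹ = g^a
    have hgcd : Nat.gcd (m + 1) a = 1 := by
      have h2 : orderOf (gg m ^ a) = m + 1 := by rw [← ha, horder]
      rw [orderOf_pow, orderOf_gg hm] at h2
      have hd : Nat.gcd (m + 1) a ∣ m + 1 := Nat.gcd_dvd_left _ _
      have h3 := Nat.div_mul_cancel hd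
      rw [h2] at h3
      exact Nat.eq_of_mul_eq_mul_left (Nat.succ_pos m) (by rw [mul_one]; exact h3)
    have hrel : σ * gg m = gg m ^ a * σ := by
      have : σ * gg m * σ⁻¹ * σ = gg m ^ a * σ := by rw [ha]
      rwa [inv_mul_cancel_right] at this
    have hstep : ∀ i : Fin (m + 1), σ (i + 1) = σ i + (a : Fin (m + 1)) := by
      intro i
      have := congrArg (fun τ : Equiv.Perm (Fin (m + 1)) => τ i) hrel
      simpa [Equiv.Perm.mul_apply, gg_apply, gg_pow] using this
    have key : ∀ j : ℕ, σ (j : Fin (m + 1)) = σ 0 + (j : Fin (m + 1)) * (a : Fin (m + 1)) := by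
      intro j
      induction j with
      | zero => simp
      | succ j ih =>
        have : ((j + 1 : ℕ) : Fin (m + 1)) = (j : Fin (m + 1)) + 1 := by push_cast; ring
        rw [this, hstep, ih]
        push_cast
        ring
    refine ⟨σ 0, (a : Fin (m + 1)), ?_, ?_⟩
    · rw [Fin.val_natCast]
      rw [Nat.gcd_rec] at hgcd
      exact hgcd
    · intro i
      have := key i.val
      rwa [Fin.cast_val_eq_self] at this
  · -- impossible: reflection has order ≤ 2
    exfalso
    have hsq : (gg m ^ a * hh m) * (gg m ^ a * hh m) = 1 := by
      calc (gg m ^ a * hh m) * (gg m ^ a * hh m)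
          = gg m ^ a * (hh m * gg m ^ a) * hh m := by group
        _ = gg m ^ a * (gg m ^ (a * m) * hh m) * hh m := by rw [hh_mul_gg_pow]
        _ = gg m ^ (a + a * m) * (hh m * hh m) := by rw [pow_add]; group
        _ = 1 := by
            rw [hh_sq, mul_one, show a + a * m = a * (m + 1) from by ring, gg_pow_mul_card]
    have : orderOf (σ * gg m * σ⁻¹) ∣ 2 := by
      apply orderOf_dvd_of_pow_eq_one
      rw [ha, pow_two]
      exact hsq
    rw [horder] at this
    have := Nat.le_of_dvd (by norm_num) this
    omega

/-- Reverse direction: affine maps normalize. -/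
private lemma affine_mem_normalizer (c k : Fin (m + 1))
    (σ : Equiv.Perm (Fin (m + 1))) (hσ : ∀ i, σ i = c + i * k) :
    σ ∈ Subgroup.normalizer (GG m : Set (Equiv.Perm (Fin (m + 1)))) := by
  have hconj_g : σ * gg m * σ⁻¹ = gg m ^ k.val := by
    have h1 : σ * gg m = gg m ^ k.val * σ := by
      ext i
      simp only [Equiv.Perm.mul_apply, gg_apply, gg_pow, hσ, Fin.cast_val_eq_self]
      ring
    rw [h1, mul_assoc, mul_inv_cancel, mul_one]
  have hconj_h : σ * hh m * σ⁻¹ = gg m ^ ((2 * c - k + 1).val) * hh m := by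
    have h1 : σ * hh m = gg m ^ ((2 * c - k + 1).val) * hh m * σ := by
      ext i
      simp only [Equiv.Perm.mul_apply, hh_apply, gg_pow, hσ, Fin.cast_val_eq_self]
      ring
    rw [h1, mul_assoc, mul_inv_cancel, mul_one]
  have hg' : σ * gg m * σ⁻¹ ∈ GG m := hconj_g ▸ pow_mem gg_mem _
  have hh' : σ * hh m * σ⁻¹ ∈ GG m := hconj_h ▸ mul_mem (pow_mem gg_mem _) hh_mem
  have main : ∀ τ, τ ∈ (GG m : Set (Equiv.Perm (Fin (m + 1)))) →
      σ * τ * σ⁻¹ ∈ (GG m : Set (Equiv.Perm (Fin (m + 1)))) := by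
    intro τ hτ
    have hpow : ∀ a : ℕ, σ * gg m ^ a * σ⁻¹ = (σ * gg m * σ⁻¹) ^ a := by
      intro a
      simpa [MulAut.conj_apply] using (map_pow (MulAut.conj σ) (gg m) a).symm
    rcases (memGG_iff τ).mp hτ with ⟨a, rfl | rfl⟩
    · rw [SetLike.mem_coe, hpow a]
      exact pow_mem hg' a
    · have hsplit : σ * (gg m ^ a * hh m) * σ⁻¹
          = (σ * gg m ^ a * σ⁻¹) * (σ * hh m * σ⁻¹) := by group
      rw [SetLike.mem_coe, hsplit, hpow a]
      exact mul_mem (pow_mem hg' a) hh'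
  exact Subgroup.mem_normalizer_fintype main

private lemma affine_injective (c k : Fin (m + 1)) (hk : Nat.gcd k.val (m + 1) = 1) :
    Function.Injective (fun i : Fin (m + 1) => c + i * k) := by
  intro i j hij
  simp only [add_right_inj] at hij
  have hv : (i.val * k.val) % (m + 1) = (j.val * k.val) % (m + 1) := by
    have := congrArg Fin.val hij
    simpa [Fin.val_mul] using this
  have : i.val % (m + 1) = j.val % (m + 1) :=
    Nat.ModEq.cancel_right_of_coprime (by rwa [Nat.gcd_comm] at hk) hv
  rw [Nat.mod_eq_of_lt i.isLt, Nat.mod_eq_of_lt j.isLt] at this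
  exact Fin.ext this

private noncomputable def affinePerm (c k : Fin (m + 1)) (hk : Nat.gcd k.val (m + 1) = 1) :
    Equiv.Perm (Fin (m + 1)) :=
  Equiv.ofBijective _ (Finite.injective_iff_bijective.mp (affine_injective c k hk))

private lemma affinePerm_apply (c k : Fin (m + 1)) (hk : Nat.gcd k.val (m + 1) = 1)
    (i : Fin (m + 1)) : affinePerm c k hk i = c + i * k := rfl

private lemma zero_one_data (σ : Equiv.Perm (Fin (m + 1)))
    (c k : Fin (m + 1)) (hf : ∀ i, σ i = c + i * k) : σ 0 = c ∧ σ 1 - σ 0 = k := by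
  constructor
  · rw [hf 0]; ring
  · rw [hf 1, hf 0]; ring

private lemma gcd_of_mem (hm : 2 ≤ m) (σ : Equiv.Perm (Fin (m + 1)))
    (hσ : σ ∈ Subgroup.normalizer (GG m : Set (Equiv.Perm (Fin (m + 1))))) : Nat.gcd ((σ 1 - σ 0)).val (m + 1) = 1 := by
  obtain ⟨c, k, hk, hf⟩ := normalizer_sub hm σ hσ
  obtain ⟨h0, h1⟩ := zero_one_data σ c k hf
  rw [h1]
  exact hk

private noncomputable def normEquiv (hm : 2 ≤ m) :
    (Fin (m + 1) × {k : Fin (m + 1) // Nat.gcd k.val (m + 1) = 1}) ≃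
      (Subgroup.normalizer (GG m : Set (Equiv.Perm (Fin (m + 1)))) : Subgroup (Equiv.Perm (Fin (m + 1)))) where
  toFun p := ⟨affinePerm p.1 p.2.1 p.2.2,
    affine_mem_normalizer p.1 p.2.1 _ (fun i => rfl)⟩
  invFun s := (s.1 0, ⟨s.1 1 - s.1 0, gcd_of_mem hm s.1 s.2⟩)
  left_inv p := by
    obtain ⟨c, k, hk⟩ := p
    obtain ⟨h0, h1⟩ := zero_one_data (affinePerm c k hk) c k (fun i => rfl)
    simp only [Prod.mk.injEq, Subtype.mk.injEq]
    exact ⟨h0, by rw [h1]⟩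
  right_inv s := by
    obtain ⟨σ, hσ⟩ := s
    obtain ⟨c, k, hk, hf⟩ := normalizer_sub hm σ hσ
    obtain ⟨h0, h1⟩ := zero_one_data σ c k hf
    apply Subtype.ext
    apply Equiv.ext
    intro i
    show σ 0 + i * (σ 1 - σ 0) = σ i
    rw [h1, h0]
    exact (hf i).symm

private lemma card_coprime_subtype (hm : 2 ≤ m) :
    Nat.card {k : Fin (m + 1) // Nat.gcd k.val (m + 1) = 1} = Nat.totient (m + 1) := by
  rw [Nat.totient_eq_card_lt_and_coprime]
  apply Nat.card_congr
  exact
    { toFun := fun k => ⟨k.1.val, k.1.isLt, by rw [Nat.Coprime, Nat.gcd_comm]; exact k.2⟩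
      invFun := fun x => ⟨⟨x.1, x.2.1⟩, by rw [Nat.gcd_comm]; exact x.2.2⟩
      left_inv := fun k => rfl
      right_inv := fun x => rfl }

end NormalizerDihedralAux

open NormalizerDihedralAux in
/-- For `n ≥ 3`, the normalizer in `S_n` of the dihedral subgroup generated by the `n`-cycle
`g = finRotate n` and the reversal `h = Fin.revPerm` (on `{1,…,n}` modelled as `Fin n`)
is exactly the set of permutations `σ_{x,k} : i ↦ x + (i-1)k (mod n)` with
`x, k ∈ {1,…,n}` and `gcd(k,n) = 1`; consequently it has cardinality `n * φ(n)`. -/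
theorem normalizer_dihedral_subgroup (n : ℕ) (hn : 3 ≤ n) :
    ((Subgroup.normalizer ((Subgroup.closure {finRotate n, Fin.revPerm} :
        Subgroup (Equiv.Perm (Fin n))) : Set (Equiv.Perm (Fin n))) :
        Subgroup (Equiv.Perm (Fin n))) : Set (Equiv.Perm (Fin n))) =
      {σ : Equiv.Perm (Fin n) | ∃ x k : ℕ, 1 ≤ x ∧ x ≤ n ∧ 1 ≤ k ∧ k ≤ n ∧
        Nat.gcd k n = 1 ∧ ∀ i : Fin n, (σ i).val = (x - 1 + i.val * k) % n} ∧
    Nat.card (Subgroup.normalizer ((Subgroup.closure {finRotate n, Fin.revPerm} :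
        Subgroup (Equiv.Perm (Fin n))) : Set (Equiv.Perm (Fin n))))
      = n * Nat.totient n := by
  obtain ⟨m, rfl⟩ : ∃ m, n = m + 1 := ⟨n - 1, by omega⟩
  have hm : 2 ≤ m := by omega
  have hGG : (Subgroup.closure {finRotate (m + 1), Fin.revPerm} :
      Subgroup (Equiv.Perm (Fin (m + 1)))) = GG m := rfl
  constructor
  · ext σ
    simp only [Set.mem_setOf_eq, SetLike.mem_coe, hGG]
    have hmod1 : ∀ a b : ℕ, (a + b % (m + 1)) % (m + 1) = (a + b) % (m + 1) := by
      intro a b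
      exact (Nat.ModEq.refl a).add (Nat.mod_modEq b (m + 1))
    have hmod2 : ∀ a b c : ℕ,
        (a % (m + 1) + (b * (c % (m + 1))) % (m + 1)) % (m + 1) = (a + b * c) % (m + 1) := by
      intro a b c
      have h1 : a % (m + 1) ≡ a [MOD m + 1] := Nat.mod_modEq a (m + 1)
      have h2 : (b * (c % (m + 1))) % (m + 1) ≡ b * c [MOD m + 1] :=
        (Nat.mod_modEq _ (m + 1)).trans ((Nat.mod_modEq c (m + 1)).mul_left b)
      exact h1.add h2
    constructor
    · intro hσ
      obtain ⟨c, k, hk, hf⟩ := normalizer_sub hm σ hσ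
      have hkpos : 1 ≤ k.val := by
        rcases Nat.eq_zero_or_pos k.val with h0 | h1
        · rw [h0, Nat.gcd_zero_left] at hk
          omega
        · exact h1
      have hcl := c.isLt
      have hkl := k.isLt
      refine ⟨c.val + 1, k.val, by omega, by omega, hkpos, by omega, hk, ?_⟩
      intro i
      rw [hf i, Fin.val_add, Fin.val_mul]
      simp only [Nat.add_sub_cancel]
      exact hmod1 c.val (i.val * k.val)
    · rintro ⟨x, k, hx1, hx2, hk1, hk2, hk, hform⟩
      apply affine_mem_normalizer ((x - 1 : ℕ) : Fin (m + 1)) ((k : ℕ) : Fin (m + 1)) σ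
      intro i
      apply Fin.ext
      rw [hform i, Fin.val_add, Fin.val_mul, Fin.val_natCast, Fin.val_natCast]
      exact (hmod2 (x - 1) i.val k).symm
  · rw [hGG, ← Nat.card_congr (normEquiv hm), Nat.card_prod, Nat.card_eq_fintype_card,
      Fintype.card_fin, card_coprime_subtype hm]
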